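/- Over any local ring R of a non-archimedean local field (characteristic of the field not 2), if the R-lattice J primitively represents a lattice K of rank k, then for every α ∈ 2R the lattice ℍ ⊥ J primitively represents ⟨α⟩ ⊥ K. -/

import Mathlib

open Matrix

/-- Primitive representation: `T` with `Tᵀ H T = G` whose image is a direct summand
(equivalently `T` has a left inverse). -/
def PrimRep {R : Type*} [CommRing R] {ι κ : Type*} [Fintype ι] [Fintype κ] [DecidableEq κ]
    (G : Matrix κ κ R) (H : Matrix ι ι R) : Prop :=
  ∃ T : Matrix ι κ R, Tᵀ * H * T = G ∧ ∃ P : Matrix κ ι R, P * T = 1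

/-- Over the ring of integers `R` of a non-archimedean local field of characteristic `≠ 2`:
if `J` primitively represents `K`, then for every `α ∈ 2R` the lattice `ℍ ⊥ J` primitively
represents `⟨α⟩ ⊥ K`. -/
theorem hyp_perp_represents
    (R : Type*) [CommRing R] [IsDomain R] [IsDiscreteValuationRing R]
    [IsAdicComplete (IsLocalRing.maximalIdeal R) R]
    [Finite (IsLocalRing.ResidueField R)]
    (h2 : (2 : R) ≠ 0)
    {m k : ℕ} (J : Matrix (Fin m) (Fin m) R) (K : Matrix (Fin k) (Fin k) R)
    (hJ : J.IsSymm) (hK : K.IsSymm) (hJd : J.det ≠ 0) (hKd : K.det ≠ 0)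
    (hrep : PrimRep K J) (α : R) (hα : ∃ β : R, α = 2 * β) :
    PrimRep (Matrix.fromBlocks (!![α] : Matrix (Fin 1) (Fin 1) R) 0 0 K)
      (Matrix.fromBlocks (!![0, 1; 1, 0] : Matrix (Fin 2) (Fin 2) R) 0 0 J) := by
  obtain ⟨T, hT, P, hP⟩ := hrep
  obtain ⟨β, hβ⟩ := hα
  refine ⟨Matrix.fromBlocks (!![1; β]) 0 0 T, ?_, Matrix.fromBlocks (!![1, 0]) 0 0 P, ?_⟩
  · rw [Matrix.fromBlocks_transpose, Matrix.fromBlocks_multiply, Matrix.fromBlocks_multiply]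
    simp [hT, hβ]
    congr 1
    · ext i j
      fin_cases i; fin_cases j
      simp [Matrix.mul_apply, Fin.sum_univ_succ]
      ring
  · rw [Matrix.fromBlocks_multiply]
    simp [hP]
    rw [show (!![1] : Matrix (Fin 1) (Fin 1) R) = 1 by
      ext i j; fin_cases i; fin_cases j; simp]
    exact Matrix.fromBlocks_one
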